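/- Fix an index 1 ≤ i ≤ r, let u, v ∈ W^{P_i}, y ∈ W_{P_i}, and γ ∈ Φ_{P_i}⁺, and set β := vγ (a positive root, since v ∈ W^{P_i}). Then s_γ y < y if and only if s_β (v y u⁻¹) < v y u⁻¹ in the Bruhat order. -/

import Mathlib

open scoped Classical

/-- Data of a root system with a fixed choice of simple roots: an ambient
`ℚ`-vector space `V`, a set of roots `Φ` with a distinguished subset `pos` of
positive roots, a coroot functional `coroot β = ⟨·, β^∨⟩` for each root, and
simple roots `α 1, …, α r`. -/
structure RootData where
  r : ℕ
  V : Type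
  [grp : AddCommGroup V]
  [mod : Module ℚ V]
  Φ : Set V
  pos : Set V
  coroot : V → Module.Dual ℚ V
  α : Fin r → V

attribute [instance] RootData.grp RootData.mod

namespace RootData

variable (R : RootData)

/-- The group of linear automorphisms of `V`, in which the Weyl group lives. -/
abbrev Aut : Type := R.V ≃ₗ[ℚ] R.V

/-- The linear map `v ↦ v - ⟨v, β^∨⟩ β`. -/
noncomputable def reflMap (β : R.V) : R.V →ₗ[ℚ] R.V :=
  LinearMap.id - (R.coroot β).smulRight β

/-- The reflection `s_β` associated to a root `β`, as a linear automorphism. -/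
noncomputable def s (β : R.V) : R.Aut :=
  if h : (R.reflMap β).comp (R.reflMap β) = LinearMap.id then
    LinearEquiv.ofLinear (R.reflMap β) (R.reflMap β) h h
  else LinearEquiv.refl ℚ R.V

/-- The simple reflections `s_i := s_{α_i}`. -/
noncomputable def S (i : Fin R.r) : R.Aut := R.s (R.α i)

/-- The Weyl group `W`, generated by the simple reflections. -/
noncomputable def weylGroup : Subgroup R.Aut := Subgroup.closure (Set.range R.S)

/-- The product `s_{i_1} ⋯ s_{i_k}` of a word in the simple reflections. -/
noncomputable def wordProd (l : List (Fin R.r)) : R.Aut := (l.map R.S).prod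

/-- The length function on `W`: least length of a word in the simple
reflections expressing the given element. -/
noncomputable def len (w : R.Aut) : ℕ :=
  sInf {n | ∃ l : List (Fin R.r), l.length = n ∧ R.wordProd l = w}

/-- A word is reduced if its length equals the length of its product. -/
def Reduced (l : List (Fin R.r)) : Prop := R.len (R.wordProd l) = l.length

/-- The Bruhat order on `W`: `u ≤ w` iff some reduced word for `w` has a
subword whose product is `u`. -/
def BruhatLE (u w : R.Aut) : Prop :=
  ∃ l : List (Fin R.r), R.Reduced l ∧ R.wordProd l = w ∧
    ∃ l' : List (Fin R.r), l'.Sublist l ∧ R.wordProd l' = u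

/-- Strict Bruhat order. -/
def BruhatLT (u w : R.Aut) : Prop := R.BruhatLE u w ∧ u ≠ w

/-- One step of the Demazure product: `s_i * w := max {w, s_i w}`. -/
noncomputable def dmulStep (i : Fin R.r) (x : R.Aut) : R.Aut :=
  if R.len x < R.len (R.S i * x) then R.S i * x else x

/-- Demazure product of a word in the simple reflections against `w`:
`s_{i_1} * (s_{i_2} * (⋯ * (s_{i_k} * w)))`. -/
noncomputable def dmulList (l : List (Fin R.r)) (w : R.Aut) : R.Aut :=
  l.foldr R.dmulStep w

/-- The Demazure product `v * w` on the Weyl group, computed by choosing a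
reduced word for `v` (it is independent of this choice). -/
noncomputable def dmul (v w : R.Aut) : R.Aut :=
  if h : ∃ l : List (Fin R.r), R.Reduced l ∧ R.wordProd l = v then
    R.dmulList h.choose w
  else v * w

/-- The parabolic subgroup `W_{P_i}` generated by the simple reflections
`s_j`, `j ≠ i`. -/
noncomputable def WPar (i : Fin R.r) : Subgroup R.Aut :=
  Subgroup.closure (R.S '' {j | j ≠ i})

/-- `W^{P_i}`: the set of minimal-length representatives of cosets of
`W/W_{P_i}`. -/
def minReps (i : Fin R.r) : Set R.Aut :=
  {v | v ∈ R.weylGroup ∧ ∀ p ∈ R.WPar i, R.len v ≤ R.len (v * p)}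

/-- `u` is the minimal-length representative of the coset `w W_{P_i}`. -/
def IsMinRep (i : Fin R.r) (u w : R.Aut) : Prop :=
  u ∈ R.minReps i ∧ u⁻¹ * w ∈ R.WPar i

/-- A weight is dominant if it pairs nonnegatively with every simple coroot. -/
def Dominant (lam : R.V) : Prop := ∀ i : Fin R.r, 0 ≤ R.coroot (R.α i) lam

/-- The dual action of the Weyl group on `V* `: `(u f)(v) = f(u⁻¹ v)`. -/
noncomputable def dualAct (u : R.Aut) (f : Module.Dual ℚ R.V) : Module.Dual ℚ R.V :=
  f.comp (u.symm : R.V →ₗ[ℚ] R.V)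

/-- The Demazure polytope `P_λ^w := conv {uλ : u ∈ W, u ≤ w}`. -/
noncomputable def demPolytope (lam : R.V) (w : R.Aut) : Set R.V :=
  convexHull ℚ {m | ∃ u : R.Aut, u ∈ R.weylGroup ∧ R.BruhatLE u w ∧ m = u lam}

/-- Membership in the weight lattice `X`. -/
def IsWeight (lam : R.V) : Prop := ∀ β ∈ R.Φ, ∃ m : ℤ, R.coroot β lam = (m : ℚ)

/-- The root lattice `Q = ℤΦ`. -/
noncomputable def rootLattice : AddSubgroup R.V := AddSubgroup.closure R.Φ

/-- `w₀` is the longest element of the Weyl group. -/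
def IsLongest (w₀ : R.Aut) : Prop :=
  w₀ ∈ R.weylGroup ∧ ∀ g ∈ R.weylGroup, R.len g ≤ R.len w₀

/-- The positive roots `Φ_{P_i}⁺ = Φ⁺ ∩ span {α_j : j ≠ i}` of the standard
Levi subsystem. -/
def parPos (i : Fin R.r) : Set R.V :=
  {η | η ∈ R.pos ∧ η ∈ Submodule.span ℚ (R.α '' {j | j ≠ i})}

/-- The value `D_i (e^λ)` of the Demazure operator on a basis element of the
group ring `ℤ[X]`. -/
noncomputable def demOnBasis (i : Fin R.r) (lam : R.V) : R.V →₀ ℤ :=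
  if 0 ≤ ⌊R.coroot (R.α i) lam⌋ then
    ∑ k ∈ Finset.range (⌊R.coroot (R.α i) lam⌋.toNat + 1),
      Finsupp.single (lam - (k : ℚ) • R.α i) 1
  else if ⌊R.coroot (R.α i) lam⌋ = -1 then 0
  else - ∑ k ∈ Finset.range ((-⌊R.coroot (R.α i) lam⌋).toNat - 1),
      Finsupp.single (lam + ((k : ℚ) + 1) • R.α i) 1

/-- The Demazure operator `D_i`, as a `ℤ`-linear endomorphism of the group
ring `ℤ[X]` (realized as finitely supported functions `V →₀ ℤ`). -/
noncomputable def demOp (i : Fin R.r) : (R.V →₀ ℤ) →ₗ[ℤ] (R.V →₀ ℤ) :=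
  Finsupp.lsum ℤ fun lam => LinearMap.toSpanSingleton ℤ (R.V →₀ ℤ) (R.demOnBasis i lam)

/-- The Demazure character `D_{i_1} ⋯ D_{i_k} (e^λ)`. -/
noncomputable def demChar (l : List (Fin R.r)) (lam : R.V) : R.V →₀ ℤ :=
  l.foldr (fun i p => R.demOp i p) (Finsupp.single lam 1)

/-- The axioms of a finite crystallographic root system spanning `V`, with
simple roots `α_i` and positive roots `pos`. -/
structure IsRootSystem (R : RootData) : Prop where
  finite : R.Φ.Finite
  span_top : Submodule.span ℚ R.Φ = ⊤
  ne_zero : ∀ β ∈ R.Φ, β ≠ 0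
  coroot_self : ∀ β ∈ R.Φ, R.coroot β β = 2
  crystallographic : ∀ β ∈ R.Φ, ∀ γ ∈ R.Φ, ∃ m : ℤ, R.coroot β γ = (m : ℚ)
  reflection_stable : ∀ β ∈ R.Φ, ∀ γ ∈ R.Φ, γ - R.coroot β γ • β ∈ R.Φ
  simple_mem : ∀ i, R.α i ∈ R.Φ
  indep : LinearIndependent ℚ R.α
  pos_subset : R.pos ⊆ R.Φ
  pos_or_neg : ∀ β ∈ R.Φ, (β ∈ R.pos ∧ -β ∉ R.pos) ∨ (β ∉ R.pos ∧ -β ∈ R.pos)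
  simple_pos : ∀ i, R.α i ∈ R.pos
  pos_nonneg_comb : ∀ β ∈ R.pos, ∃ c : Fin R.r → ℚ, (∀ i, 0 ≤ c i) ∧ β = ∑ i, c i • R.α i

end RootData
namespace RootData

variable {R : RootData}

lemma reflMap_apply (β x : R.V) : R.reflMap β x = x - R.coroot β x • β := by
  simp [reflMap]

lemma reflMap_invol (hR : R.IsRootSystem) {β : R.V} (hβ : β ∈ R.Φ) :
    (R.reflMap β).comp (R.reflMap β) = LinearMap.id := by
  ext x
  simp only [LinearMap.comp_apply, reflMap_apply, LinearMap.id_apply, map_sub, map_smul,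
    hR.coroot_self β hβ]
  module

lemma s_apply (hR : R.IsRootSystem) {β : R.V} (hβ : β ∈ R.Φ) (x : R.V) :
    R.s β x = x - R.coroot β x • β := by
  rw [s, dif_pos (reflMap_invol hR hβ)]
  rw [LinearEquiv.ofLinear_apply, reflMap_apply]

lemma s_mul_self (hR : R.IsRootSystem) {β : R.V} (hβ : β ∈ R.Φ) :
    R.s β * R.s β = 1 := by
  ext x
  have h2 := hR.coroot_self β hβ
  show R.s β (R.s β x) = x
  rw [s_apply hR hβ, s_apply hR hβ, map_sub, map_smul, h2]
  simp only [smul_eq_mul]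
  module

lemma s_inv (hR : R.IsRootSystem) {β : R.V} (hβ : β ∈ R.Φ) :
    (R.s β)⁻¹ = R.s β := by
  rw [inv_eq_iff_mul_eq_one, s_mul_self hR hβ]

lemma s_root (hR : R.IsRootSystem) {β : R.V} (hβ : β ∈ R.Φ) :
    R.s β β = -β := by
  rw [s_apply hR hβ, hR.coroot_self β hβ]
  module

lemma s_mem (hR : R.IsRootSystem) {β : R.V} (hβ : β ∈ R.Φ) {x : R.V} (hx : x ∈ R.Φ) :
    R.s β x ∈ R.Φ := by
  rw [s_apply hR hβ]
  exact hR.reflection_stable β hβ x hx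

lemma neg_mem (hR : R.IsRootSystem) {β : R.V} (hβ : β ∈ R.Φ) : -β ∈ R.Φ := by
  have := s_mem hR hβ hβ
  rwa [s_root hR hβ] at this

lemma not_pos_neg (hR : R.IsRootSystem) {β : R.V} (hβ : β ∈ R.Φ) (h : β ∈ R.pos) :
    -β ∉ R.pos := by
  rcases hR.pos_or_neg β hβ with ⟨_, h2⟩ | ⟨h1, _⟩
  · exact h2
  · exact absurd h h1

lemma neg_pos_of_not_pos (hR : R.IsRootSystem) {β : R.V} (hβ : β ∈ R.Φ) (h : β ∉ R.pos) :
    -β ∈ R.pos := by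
  rcases hR.pos_or_neg β hβ with ⟨h1, _⟩ | ⟨_, h2⟩
  · exact absurd h1 h
  · exact h2

/-- Uniqueness of the reflection along a root. -/
lemma dual_unique (hR : R.IsRootSystem) {β : R.V} (hβΦ : β ∈ R.Φ)
    (f g : Module.Dual ℚ R.V) (hfβ : f β = 2) (hgβ : g β = 2)
    (hf : ∀ x ∈ R.Φ, x - f x • β ∈ R.Φ) (hg : ∀ x ∈ R.Φ, x - g x • β ∈ R.Φ) :
    f = g := by
  by_contra hne
  -- pick x₀ in Φ where f and g differ
  have hx0 : ∃ x₀ ∈ R.Φ, f x₀ ≠ g x₀ := by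
    by_contra hall
    push_neg at hall
    exact hne (LinearMap.ext_on hR.span_top hall)
  obtain ⟨x₀, hx₀Φ, hx₀⟩ := hx0
  -- one step: y ∈ Φ → y + (f y - g y) • β ∈ Φ
  have step : ∀ y ∈ R.Φ, y + (f y - g y) • β ∈ R.Φ := by
    intro y hy
    have h2 := hg _ (hf y hy)
    have e : y - f y • β - (g (y - f y • β)) • β = y + (f y - g y) • β := by
      rw [map_sub, map_smul, hgβ]
      simp only [smul_eq_mul]
      module
    rwa [e] at h2
  set c := f x₀ - g x₀ with hc
  have hcne : c ≠ 0 := sub_ne_zero.mpr hx₀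
  have iter : ∀ n : ℕ, x₀ + ((n : ℚ) * c) • β ∈ R.Φ := by
    intro n
    induction n with
    | zero => simpa using hx₀Φ
    | succ n ih =>
      have h := step _ ih
      have e : f (x₀ + ((n:ℚ)*c)•β) - g (x₀ + ((n:ℚ)*c)•β) = c := by
        rw [map_add, map_add, map_smul, map_smul, hfβ, hgβ, hc]
        ring
      rw [e] at h
      have e2 : x₀ + ((n:ℚ)*c)•β + c•β = x₀ + (((n:ℕ)+1 : ℚ)*c)•β := by
        module
      rw [e2] at h
      convert h using 4
      push_cast
      ring
  have hβ0 := hR.ne_zero β hβΦ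
  have hinj : Function.Injective (fun n : ℕ => x₀ + ((n:ℚ)*c)•β) := by
    intro n m hnm
    simp only [add_right_inj] at hnm
    have := smul_left_injective ℚ hβ0 hnm
    have := mul_right_cancel₀ hcne this
    exact_mod_cast this
  exact hR.finite.not_infinite (Set.infinite_of_injective_forall_mem hinj iter)

end RootData
namespace RootData

variable {R : RootData}

/-- Any automorphism acting like a reflection along `β` and preserving `Φ` is `s β`. -/
lemma eq_s (hR : R.IsRootSystem) {β : R.V} (hβ : β ∈ R.Φ) (T : R.Aut)
    (f : Module.Dual ℚ R.V) (hT : ∀ x, T x = x - f x • β) (hfβ : f β = 2)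
    (hTΦ : ∀ x ∈ R.Φ, T x ∈ R.Φ) : T = R.s β := by
  have hfg : f = R.coroot β := by
    refine dual_unique hR hβ f (R.coroot β) hfβ (hR.coroot_self β hβ) ?_ ?_
    · intro x hx
      rw [← hT x]; exact hTΦ x hx
    · intro x hx
      exact hR.reflection_stable β hβ x hx
  ext x
  rw [show (T : R.V → R.V) x = T x from rfl, hT x, hfg, s_apply hR hβ]

lemma weyl_maps (hR : R.IsRootSystem) {g : R.Aut} (hg : g ∈ R.weylGroup) :
    (∀ x ∈ R.Φ, g x ∈ R.Φ) ∧ (∀ x ∈ R.Φ, g⁻¹ x ∈ R.Φ) := by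
  induction hg using Subgroup.closure_induction with
  | mem x hx =>
      obtain ⟨j, rfl⟩ := hx
      have hα := hR.simple_mem j
      constructor
      · intro x hx; exact s_mem hR hα hx
      · intro x hx
        rw [show R.S j = R.s (R.α j) from rfl, s_inv hR hα]
        exact s_mem hR hα hx
  | one => exact ⟨fun x hx => hx, fun x hx => by simpa using hx⟩
  | mul a b _ _ ha hb =>
      refine ⟨fun x hx => ?_, fun x hx => ?_⟩
      · exact ha.1 _ (hb.1 x hx)
      · rw [mul_inv_rev]
        exact hb.2 _ (ha.2 x hx)
  | inv a _ ha => exact ⟨fun x hx => ha.2 x hx, fun x hx => by simpa using ha.1 x hx⟩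

lemma weyl_mem_Φ (hR : R.IsRootSystem) {g : R.Aut} (hg : g ∈ R.weylGroup)
    {x : R.V} (hx : x ∈ R.Φ) : g x ∈ R.Φ := (weyl_maps hR hg).1 x hx

/-- Conjugation formula: `g s_β g⁻¹ = s_{gβ}`. -/
lemma conj_s (hR : R.IsRootSystem) {g : R.Aut} (hg : g ∈ R.weylGroup)
    {β : R.V} (hβ : β ∈ R.Φ) : g * R.s β * g⁻¹ = R.s (g β) := by
  have hgβ : g β ∈ R.Φ := weyl_mem_Φ hR hg hβ
  refine eq_s hR hgβ _ ((R.coroot β).comp (g⁻¹ : R.Aut).toLinearMap) ?_ ?_ ?_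
  · intro x
    show g (R.s β (g⁻¹ x)) = _
    rw [s_apply hR hβ, map_sub, map_smul]
    rw [show g (g⁻¹ x) = (g * g⁻¹) x from rfl, mul_inv_cancel]
    rfl
  · show R.coroot β (g⁻¹ (g β)) = 2
    rw [show (g⁻¹ : R.Aut) (g β) = (g⁻¹ * g) β from rfl, inv_mul_cancel]
    exact hR.coroot_self β hβ
  · intro x hx
    show g (R.s β (g⁻¹ x)) ∈ R.Φ
    exact weyl_mem_Φ hR hg (s_mem hR hβ ((weyl_maps hR hg).2 x hx))

/-- `s (c • β) = s β`. -/
lemma s_smul (hR : R.IsRootSystem) {β : R.V} {c : ℚ} (hβ : β ∈ R.Φ)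
    (hcβ : c • β ∈ R.Φ) (hc : c ≠ 0) : R.s (c • β) = R.s β := by
  refine eq_s hR hβ _ (c • R.coroot (c • β)) ?_ ?_ ?_
  · intro x
    rw [s_apply hR hcβ]
    simp only [LinearMap.smul_apply, smul_eq_mul]
    module
  · simp only [LinearMap.smul_apply, smul_eq_mul]
    have : R.coroot (c • β) (c • β) = 2 := hR.coroot_self _ hcβ
    rw [map_smul, smul_eq_mul] at this
    linarith [this]
  · intro x hx
    exact s_mem hR hcβ hx

end RootData
namespace RootData

variable {R : RootData}

lemma span_α_top (hR : R.IsRootSystem) :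
    ⊤ ≤ Submodule.span ℚ (Set.range R.α) := by
  rw [← hR.span_top]
  refine Submodule.span_le.mpr ?_
  intro β hβ
  have key : ∀ x ∈ R.pos, x ∈ Submodule.span ℚ (Set.range R.α) := by
    intro x hx
    obtain ⟨c, _, rfl⟩ := hR.pos_nonneg_comb x hx
    exact Submodule.sum_mem _ fun k _ =>
      Submodule.smul_mem _ _ (Submodule.subset_span ⟨k, rfl⟩)
  rcases hR.pos_or_neg β hβ with ⟨h1, _⟩ | ⟨_, h2⟩
  · exact key β h1
  · have := key _ h2
    simpa using Submodule.neg_mem _ this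

/-- The basis of simple roots. -/
noncomputable def bas (hR : R.IsRootSystem) : Module.Basis (Fin R.r) ℚ R.V :=
  Module.Basis.mk hR.indep (span_α_top hR)

lemma bas_apply (hR : R.IsRootSystem) (k : Fin R.r) : bas hR k = R.α k :=
  Module.Basis.mk_apply _ _ _

lemma repr_of_comb (hR : R.IsRootSystem) (c : Fin R.r → ℚ) (k : Fin R.r) :
    (bas hR).repr (∑ j, c j • R.α j) k = c k := by
  have : (∑ j, c j • R.α j) = ∑ j, c j • (bas hR) j := by
    simp [bas_apply hR]
  rw [this]
  simp [Finsupp.single_apply]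

lemma coords_nonneg (hR : R.IsRootSystem) {β : R.V} (hβ : β ∈ R.pos) (k : Fin R.r) :
    0 ≤ (bas hR).repr β k := by
  obtain ⟨c, hc, rfl⟩ := hR.pos_nonneg_comb β hβ
  rw [repr_of_comb hR]
  exact hc k

lemma coords_nonpos (hR : R.IsRootSystem) {β : R.V} (hβΦ : β ∈ R.Φ) (hβ : β ∉ R.pos)
    (k : Fin R.r) : (bas hR).repr β k ≤ 0 := by
  have hneg : -β ∈ R.pos := neg_pos_of_not_pos hR hβΦ hβ
  have := coords_nonneg hR hneg k
  rw [map_neg] at this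
  simpa using this

lemma pos_of_coord_pos (hR : R.IsRootSystem) {β : R.V} (hβΦ : β ∈ R.Φ)
    {k : Fin R.r} (hk : 0 < (bas hR).repr β k) : β ∈ R.pos := by
  by_contra h
  exact absurd (lt_of_lt_of_le hk (coords_nonpos hR hβΦ h k)) (lt_irrefl _)

/-- `s_j` sends a positive root with a nonzero coordinate outside `j` to a positive root. -/
lemma S_pos (hR : R.IsRootSystem) {j k : Fin R.r} (hk : k ≠ j) {β : R.V}
    (hβ : β ∈ R.pos) (hck : (bas hR).repr β k ≠ 0) : R.S j β ∈ R.pos := by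
  have hβΦ : β ∈ R.Φ := hR.pos_subset hβ
  have hαj := hR.simple_mem j
  have hmem : R.S j β ∈ R.Φ := s_mem hR hαj hβΦ
  have hrepr : (bas hR).repr (R.S j β) k = (bas hR).repr β k := by
    rw [show R.S j β = R.s (R.α j) β from rfl, s_apply hR hαj, map_sub, map_smul]
    have hz : (bas hR).repr (R.α j) k = 0 := by
      rw [← bas_apply hR, Module.Basis.repr_self]
      simp [Finsupp.single_apply, (Ne.symm hk)]
    simp [Finsupp.sub_apply, Finsupp.smul_apply, hz]
  refine pos_of_coord_pos hR hmem (k := k) ?_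
  rw [hrepr]
  exact lt_of_le_of_ne (coords_nonneg hR hβ k) (Ne.symm hck)

/-- A root whose coordinates vanish away from `j` is a multiple of `α j`,
and its reflection is `s_j`. -/
lemma s_eq_S_of_ray (hR : R.IsRootSystem) {j : Fin R.r} {β : R.V} (hβΦ : β ∈ R.Φ)
    (h : ∀ k, k ≠ j → (bas hR).repr β k = 0) : R.s β = R.S j := by
  have hsum := Module.Basis.sum_repr (bas hR) β
  have hβeq : β = ((bas hR).repr β j) • R.α j := by
    have hs := Finset.sum_eq_single (s := Finset.univ)
      (f := fun k => ((bas hR).repr β) k • (bas hR) k) j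
      (fun b _ hb => by rw [h b hb, zero_smul])
      (fun hj => absurd (Finset.mem_univ j) hj)
    rw [hsum] at hs
    rw [bas_apply hR] at hs
    exact hs
  have hc : (bas hR).repr β j ≠ 0 := by
    intro h0
    apply hR.ne_zero β hβΦ
    rw [hβeq, h0, zero_smul]
  have : R.s β = R.s (((bas hR).repr β j) • R.α j) := by rw [← hβeq]
  rw [this, s_smul hR (hR.simple_mem j) (hβeq ▸ hβΦ) hc]
  rfl

end RootData
namespace RootData

variable {R : RootData}

lemma wordProd_nil : R.wordProd [] = 1 := rfl

lemma wordProd_cons (i : Fin R.r) (l : List (Fin R.r)) :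
    R.wordProd (i :: l) = R.S i * R.wordProd l := by
  simp [wordProd]

lemma wordProd_append (l l' : List (Fin R.r)) :
    R.wordProd (l ++ l') = R.wordProd l * R.wordProd l' := by
  simp [wordProd]

lemma S_mem_weyl (i : Fin R.r) : R.S i ∈ R.weylGroup :=
  Subgroup.subset_closure ⟨i, rfl⟩

lemma S_inv (hR : R.IsRootSystem) (i : Fin R.r) : (R.S i)⁻¹ = R.S i :=
  s_inv hR (hR.simple_mem i)

lemma S_mul_self (hR : R.IsRootSystem) (i : Fin R.r) : R.S i * R.S i = 1 :=
  s_mul_self hR (hR.simple_mem i)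

lemma wordProd_mem (l : List (Fin R.r)) : R.wordProd l ∈ R.weylGroup := by
  induction l with
  | nil => exact one_mem _
  | cons i l ih => rw [wordProd_cons]; exact mul_mem (S_mem_weyl i) ih

lemma wordProd_reverse (hR : R.IsRootSystem) (l : List (Fin R.r)) :
    R.wordProd l.reverse = (R.wordProd l)⁻¹ := by
  induction l with
  | nil => simp [wordProd_nil]
  | cons i l ih =>
      rw [wordProd_cons, List.reverse_cons, wordProd_append, ih, mul_inv_rev]
      congr 1
      rw [← S_inv hR i]
      simp [wordProd]

lemma exists_word (hR : R.IsRootSystem) {g : R.Aut} (hg : g ∈ R.weylGroup) :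
    ∃ l : List (Fin R.r), R.wordProd l = g := by
  induction hg using Subgroup.closure_induction with
  | mem x hx =>
      obtain ⟨j, rfl⟩ := hx
      exact ⟨[j], by simp [wordProd]⟩
  | one => exact ⟨[], rfl⟩
  | mul a b _ _ ha hb =>
      obtain ⟨la, rfl⟩ := ha; obtain ⟨lb, rfl⟩ := hb
      exact ⟨la ++ lb, wordProd_append la lb⟩
  | inv a _ ha =>
      obtain ⟨la, rfl⟩ := ha
      exact ⟨la.reverse, wordProd_reverse hR la⟩

lemma len_le_of_word {l : List (Fin R.r)} {w : R.Aut} (h : R.wordProd l = w) :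
    R.len w ≤ l.length :=
  Nat.sInf_le ⟨l, rfl, h⟩

lemma exists_reduced (hR : R.IsRootSystem) {w : R.Aut} (hw : w ∈ R.weylGroup) :
    ∃ l : List (Fin R.r), R.Reduced l ∧ R.wordProd l = w ∧ l.length = R.len w := by
  obtain ⟨l₀, hl₀⟩ := exists_word hR hw
  have hne : {n | ∃ l : List (Fin R.r), l.length = n ∧ R.wordProd l = w}.Nonempty :=
    ⟨l₀.length, l₀, rfl, hl₀⟩
  obtain ⟨l, hlen, hprod⟩ := Nat.sInf_mem hne
  refine ⟨l, ?_, hprod, hlen⟩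
  unfold Reduced
  rw [hprod]
  exact hlen.symm

lemma bruhatLE_len {x w : R.Aut} (h : R.BruhatLE x w) : R.len x ≤ R.len w := by
  obtain ⟨l, hred, hprod, l', hsub, hprod'⟩ := h
  calc R.len x ≤ l'.length := len_le_of_word hprod'
    _ ≤ l.length := hsub.length_le
    _ = R.len w := by rw [← hprod]; exact hred.symm

lemma bruhatLT_len {x w : R.Aut} (h : R.BruhatLT x w) : R.len x < R.len w := by
  obtain ⟨hle, hne⟩ := h
  obtain ⟨l, hred, hprod, l', hsub, hprod'⟩ := id hle
  rcases lt_or_eq_of_le (bruhatLE_len hle) with hlt | heq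
  · exact hlt
  · exfalso
    have h1 : R.len w ≤ l'.length := heq ▸ len_le_of_word hprod'
    have h2 : l.length = R.len w := by rw [← hprod]; exact hred.symm
    have : l' = l := hsub.eq_of_length (le_antisymm hsub.length_le (h2 ▸ h1))
    exact hne (by rw [← hprod', ← hprod, this])

lemma bruhatLE_mem {x w : R.Aut} (h : R.BruhatLE x w) :
    x ∈ R.weylGroup ∧ w ∈ R.weylGroup := by
  obtain ⟨l, _, hprod, l', _, hprod'⟩ := h
  exact ⟨hprod' ▸ wordProd_mem l', hprod ▸ wordProd_mem l⟩

lemma len_inv (hR : R.IsRootSystem) {w : R.Aut} (hw : w ∈ R.weylGroup) :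
    R.len w⁻¹ = R.len w := by
  have key : ∀ x : R.Aut, x ∈ R.weylGroup → R.len x⁻¹ ≤ R.len x := by
    intro x hx
    obtain ⟨l, _, hprod, hlen⟩ := exists_reduced hR hx
    have : R.wordProd l.reverse = x⁻¹ := by rw [wordProd_reverse hR, hprod]
    calc R.len x⁻¹ ≤ l.reverse.length := len_le_of_word this
      _ = l.length := List.length_reverse
      _ = R.len x := hlen
  refine le_antisymm (key w hw) ?_
  have := key w⁻¹ (inv_mem hw)
  simpa using this

lemma bruhatLE_inv (hR : R.IsRootSystem) {x w : R.Aut} (h : R.BruhatLE x w) :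
    R.BruhatLE x⁻¹ w⁻¹ := by
  obtain ⟨l, hred, hprod, l', hsub, hprod'⟩ := h
  refine ⟨l.reverse, ?_, by rw [wordProd_reverse hR, hprod], l'.reverse, hsub.reverse,
    by rw [wordProd_reverse hR, hprod']⟩
  unfold Reduced
  rw [wordProd_reverse hR, hprod, List.length_reverse,
    len_inv hR (hprod ▸ wordProd_mem l), ← hprod]
  exact hred

lemma bruhatLT_inv (hR : R.IsRootSystem) {x w : R.Aut} (h : R.BruhatLT x w) :
    R.BruhatLT x⁻¹ w⁻¹ :=
  ⟨bruhatLE_inv hR h.1, fun he => h.2 (by simpa using congrArg (·⁻¹) he)⟩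

end RootData
namespace RootData

variable {R : RootData}

/-- Exchange lemma: if `w⁻¹γ < 0` then `s_γ w` is the product of the word of
`w` with one letter deleted. -/
lemma exchange (hR : R.IsRootSystem) :
    ∀ l : List (Fin R.r), ∀ γ : R.V, γ ∈ R.pos → (R.wordProd l)⁻¹ γ ∉ R.pos →
    ∃ l', l'.Sublist l ∧ R.wordProd l' = R.s γ * R.wordProd l := by
  intro l
  induction l with
  | nil =>
      intro γ hγ h
      exfalso
      apply h
      simpa [wordProd_nil] using hγ
  | cons i l ih =>
      intro γ hγ h
      have hγΦ : γ ∈ R.Φ := hR.pos_subset hγ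
      have hSiγΦ : R.S i γ ∈ R.Φ := s_mem hR (hR.simple_mem i) hγΦ
      by_cases hc : R.S i γ ∈ R.pos
      · -- recurse
        have heq : (R.wordProd l)⁻¹ (R.S i γ) = (R.wordProd (i :: l))⁻¹ γ := by
          rw [wordProd_cons, mul_inv_rev, S_inv hR i]
          rfl
        obtain ⟨l'', hsub, hprod⟩ := ih (R.S i γ) hc (by rw [heq]; exact h)
        refine ⟨i :: l'', hsub.cons₂ i, ?_⟩
        have hconj : R.s (R.S i γ) = R.S i * R.s γ * (R.S i)⁻¹ :=
          (conj_s hR (S_mem_weyl i) hγΦ).symm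
        rw [wordProd_cons, hprod, wordProd_cons, hconj, S_inv hR i,
          ← mul_assoc, ← mul_assoc, ← mul_assoc, S_mul_self hR i, one_mul, mul_assoc]
      · -- γ is on the ray of α i
        have hray : ∀ k, k ≠ i → (bas hR).repr γ k = 0 := by
          intro k hk
          by_contra hck
          exact hc (S_pos hR hk hγ hck)
        have hsS : R.s γ = R.S i := s_eq_S_of_ray hR hγΦ hray
        refine ⟨l, List.sublist_cons_self i l, ?_⟩
        rw [wordProd_cons, hsS, ← mul_assoc, S_mul_self hR i, one_mul]

lemma s_mul_ne (hR : R.IsRootSystem) {γ : R.V} (hγΦ : γ ∈ R.Φ) (w : R.Aut) :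
    R.s γ * w ≠ w := by
  intro he
  have h1 : R.s γ = 1 := by
    have := mul_right_cancel (he.trans (one_mul w).symm)
    exact this
  have : R.s γ γ = γ := by rw [h1]; rfl
  rw [s_root hR hγΦ] at this
  have h0 : γ + γ = 0 := by
    nth_rewrite 1 [← this]
    abel
  have h2 : (2 : ℚ) • γ = 0 := (two_smul ℚ γ).trans h0
  exact hR.ne_zero γ hγΦ (by simpa using h2)

lemma crit_of_neg (hR : R.IsRootSystem) {γ : R.V} (hγ : γ ∈ R.pos) {w : R.Aut}
    (hw : w ∈ R.weylGroup) (hneg : w⁻¹ γ ∉ R.pos) : R.BruhatLT (R.s γ * w) w := by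
  obtain ⟨l, hred, hprod, hlen⟩ := exists_reduced hR hw
  obtain ⟨l', hsub, hprod'⟩ := exchange hR l γ hγ (by rw [hprod]; exact hneg)
  refine ⟨⟨l, hred, hprod, l', hsub, by rw [hprod', hprod]⟩, s_mul_ne hR (hR.pos_subset hγ) w⟩

/-- The key criterion: `s_γ w < w` iff `w⁻¹ γ` is a negative root. -/
theorem crit (hR : R.IsRootSystem) {γ : R.V} (hγ : γ ∈ R.pos) {w : R.Aut}
    (hw : w ∈ R.weylGroup) : R.BruhatLT (R.s γ * w) w ↔ w⁻¹ γ ∉ R.pos := by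
  have hγΦ : γ ∈ R.Φ := hR.pos_subset hγ
  constructor
  · intro h
    by_contra hpos
    set w' := R.s γ * w with hw'
    have hw'W : w' ∈ R.weylGroup := (bruhatLE_mem h.1).1
    have hΦ : w⁻¹ γ ∈ R.Φ := weyl_mem_Φ hR (inv_mem hw) hγΦ
    have hneg' : w'⁻¹ γ ∉ R.pos := by
      have : w'⁻¹ γ = -(w⁻¹ γ) := by
        rw [hw', mul_inv_rev, s_inv hR hγΦ]
        show w⁻¹ (R.s γ γ) = _
        rw [s_root hR hγΦ, map_neg]
      rw [this]
      exact not_pos_neg hR hΦ hpos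
    have h2 := crit_of_neg hR hγ hw'W hneg'
    have : R.s γ * w' = w := by
      rw [hw', ← mul_assoc, s_mul_self hR hγΦ, one_mul]
    rw [this] at h2
    have l1 := bruhatLT_len h
    have l2 := bruhatLT_len h2
    omega
  · exact crit_of_neg hR hγ hw

end RootData
/-- Two-step linear recurrence. -/
noncomputable def seq2 {M : Type*} [AddCommGroup M] [Module ℚ M] (τ : ℚ) (x0 x1 : M) : ℕ → M
  | 0 => x0
  | 1 => x1
  | (n+2) => τ • seq2 τ x0 x1 (n+1) - seq2 τ x0 x1 n

namespace RootData

variable {R : RootData}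

/-- Sign lemma: `⟨δ, β^∨⟩ > 0` implies `⟨β, δ^∨⟩ > 0`. -/
lemma sign_lemma (hR : R.IsRootSystem) {β δ : R.V} (hβ : β ∈ R.Φ) (hδ : δ ∈ R.Φ)
    (ha0 : 0 < R.coroot β δ) : 0 < R.coroot δ β := by
  obtain ⟨a, haa⟩ : ∃ x, R.coroot β δ = x := ⟨_, rfl⟩
  obtain ⟨b, hbb⟩ : ∃ x, R.coroot δ β = x := ⟨_, rfl⟩
  have ha : 0 < a := haa ▸ ha0
  rw [hbb]
  have h2β : R.coroot β β = 2 := hR.coroot_self β hβ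
  have h2δ : R.coroot δ δ = 2 := hR.coroot_self δ hδ
  have hβ0 : β ≠ 0 := hR.ne_zero β hβ
  have hδ0 : δ ≠ 0 := hR.ne_zero δ hδ
  by_contra hble
  push_neg at hble
  rcases eq_or_lt_of_le hble with hb0 | hbneg
  · -- case b = 0 : infinite string δ + n a β
    have mem : ∀ n : ℕ, δ + ((n : ℚ) * a) • β ∈ R.Φ := by
      intro n
      induction n with
      | zero => simpa using hδ
      | succ n ih =>
          have hx1 : R.s β (δ + ((n:ℚ)*a) • β) ∈ R.Φ := s_mem hR hβ ih
          have e1 : R.s β (δ + ((n:ℚ)*a) • β) = δ - ((n:ℚ)*a + a) • β := by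
            rw [s_apply hR hβ]
            simp only [map_add, map_smul, h2β, haa, smul_eq_mul]
            module
          rw [e1] at hx1
          have hx2 : R.s δ (δ - ((n:ℚ)*a + a) • β) ∈ R.Φ := s_mem hR hδ hx1
          have e2 : R.s δ (δ - ((n:ℚ)*a + a) • β) = -(δ + ((n:ℚ)*a + a) • β) := by
            rw [s_apply hR hδ]
            simp only [map_sub, map_smul, h2δ, hbb, hb0, smul_eq_mul]
            module
          rw [e2] at hx2
          have hx3 := neg_mem hR hx2
          rw [neg_neg] at hx3
          have e3 : δ + ((n:ℚ)*a + a) • β = δ + (((n+1 : ℕ) : ℚ) * a) • β := by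
            push_cast
            module
          rwa [e3] at hx3
    have hinj : Function.Injective (fun n : ℕ => δ + ((n:ℚ) * a) • β) := by
      intro n m hnm
      have h5 : ((n:ℚ) * a) • β = ((m:ℚ) * a) • β := by
        have h7 := congrArg (fun z => z - δ) hnm
        simpa using h7
      have h6 := mul_right_cancel₀ (ne_of_gt ha) (smul_left_injective ℚ hβ0 h5)
      exact_mod_cast h6
    exact hR.finite.not_infinite (Set.infinite_of_injective_forall_mem hinj mem)
  · -- case b < 0 : growing sequence
    set t : R.Aut := R.s δ * R.s β with htdef
    have ht : ∀ x : R.V, t x = x - (R.coroot β x) • β -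
        (R.coroot δ x - R.coroot β x * b) • δ := by
      intro x
      show R.s δ (R.s β x) = _
      rw [s_apply hR hβ, s_apply hR hδ]
      simp only [map_sub, map_smul, hbb, smul_eq_mul]
      try module
    set τ : ℚ := a * b - 2 with hτ
    set u : ℕ → R.V := seq2 τ β (-β + b • δ) with hu
    set p : ℕ → ℚ := seq2 τ 1 (-1) with hp
    set q : ℕ → ℚ := seq2 τ 0 b with hq
    set y : ℕ → ℚ := seq2 (2 - a*b) 1 (1 - b) with hy
    have hu0 : u 0 = β := rfl
    have hu1 : u 1 = -β + b • δ := rfl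
    have hustep : ∀ n, u (n+2) = τ • u (n+1) - u n := fun n => rfl
    have hpstep : ∀ n, p (n+2) = τ * p (n+1) - p n := fun n => rfl
    have hqstep : ∀ n, q (n+2) = τ * q (n+1) - q n := fun n => rfl
    have hystep : ∀ n, y (n+2) = (2 - a*b) * y (n+1) - y n := fun n => rfl
    have hp0 : p 0 = 1 := rfl
    have hp1 : p 1 = -1 := rfl
    have hq0 : q 0 = 0 := rfl
    have hq1 : q 1 = b := rfl
    have hy0 : y 0 = 1 := rfl
    have hy1 : y 1 = 1 - b := rfl
    -- u (n+1) = t (u n)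
    have hten : ∀ n, u (n+1) = t (u n) ∧ u (n+2) = t (u (n+1)) := by
      intro n
      induction n with
      | zero =>
          have base1 : u 1 = t (u 0) := by
            rw [hu0, hu1, ht β]
            simp only [h2β, hbb, smul_eq_mul]
            module
          have base2 : u 2 = t (u 1) := by
            have e2 : u 2 = τ • u 1 - u 0 := hustep 0
            rw [e2, hu0, hu1, ht (-β + b • δ)]
            simp only [map_add, map_neg, map_smul, h2β, h2δ, haa, hbb, smul_eq_mul, hτ]
            module
          exact ⟨base1, base2⟩
      | succ n ih =>
          refine ⟨ih.2, ?_⟩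
          have h1 : u (n+3) = τ • u (n+2) - u (n+1) := hustep (n+1)
          have h4 : u (n+2) = τ • u (n+1) - u n := hustep n
          show u (n+3) = t (u (n+2))
          calc u (n+3) = τ • u (n+2) - u (n+1) := h1
            _ = τ • t (u (n+1)) - t (u n) := by rw [ih.2, ih.1]
            _ = t (τ • u (n+1) - u n) := by rw [map_sub, map_smul]
            _ = t (u (n+2)) := by rw [← h4]
    have humem : ∀ n, u n ∈ R.Φ := by
      intro n
      induction n with
      | zero => exact hβ
      | succ n ih =>
          rw [(hten n).1]
          exact s_mem hR hδ (s_mem hR hβ ih)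
    -- coefficients
    have hcoef : ∀ n, u n = p n • β + q n • δ ∧ u (n+1) = p (n+1) • β + q (n+1) • δ := by
      intro n
      induction n with
      | zero =>
          constructor
          · rw [hu0, hp0, hq0]; module
          · rw [hu1, hp1, hq1]; module
      | succ n ih =>
          refine ⟨ih.2, ?_⟩
          show u (n+2) = p (n+2) • β + q (n+2) • δ
          rw [hustep n, hpstep n, hqstep n, ih.1, ih.2]
          module
    -- y n = (-1)^n (p n + q n)
    have hyval : ∀ n, y n = (-1:ℚ)^n * (p n + q n) ∧
        y (n+1) = (-1:ℚ)^(n+1) * (p (n+1) + q (n+1)) := by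
      intro n
      induction n with
      | zero =>
          constructor
          · rw [hy0, hp0, hq0]; norm_num
          · rw [hy1, hp1, hq1]; ring
      | succ n ih =>
          refine ⟨ih.2, ?_⟩
          show y (n+2) = (-1:ℚ)^(n+2) * (p (n+2) + q (n+2))
          rw [hystep n, hpstep n, hqstep n, ih.1, ih.2, hτ]
          ring
    -- positivity and monotonicity
    have hmono : ∀ n, 0 < y n ∧ y n < y (n+1) := by
      intro n
      induction n with
      | zero =>
          rw [hy0, hy1]
          constructor
          · norm_num
          · linarith
      | succ n ih =>
          obtain ⟨h0, h1⟩ := ih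
          have hy1pos : 0 < y (n+1) := lt_trans h0 h1
          have hσ : 2 < 2 - a * b := by nlinarith [mul_pos ha (neg_pos.mpr hbneg)]
          have h2y := mul_lt_mul_of_pos_right hσ hy1pos
          refine ⟨hy1pos, ?_⟩
          rw [hystep n]
          linarith
    have hymono : StrictMono y := strictMono_nat_of_lt_succ (fun n => (hmono n).2)
    -- injectivity of u
    have hinj : Function.Injective u := by
      intro n m hnm
      have hn := (hcoef n).1
      have hm := (hcoef m).1
      rw [hn, hm] at hnm
      by_cases hqe : q n = q m
      · rw [hqe] at hnm
        have hpe : p n = p m := smul_left_injective ℚ hβ0 (add_right_cancel hnm)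
        have hsum : p n + q n = p m + q m := by rw [hpe, hqe]
        have hyn := (hyval n).1
        have hym := (hyval m).1
        have hynpos := (hmono n).1
        have hympos := (hmono m).1
        by_contra hne
        have hyne : y n ≠ y m := fun h => hne (hymono.injective h)
        rw [hyn, hym, hsum] at hyne
        rcases Nat.even_or_odd n with hev | hod <;> rcases Nat.even_or_odd m with hev' | hod'
        · rw [hev.neg_one_pow, hev'.neg_one_pow] at hyne; exact hyne rfl
        · rw [hyn, hev.neg_one_pow, one_mul] at hynpos
          rw [hym, hod'.neg_one_pow, ← hsum] at hympos
          linarith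
        · rw [hyn, hod.neg_one_pow, hsum] at hynpos
          rw [hym, hev'.neg_one_pow, one_mul] at hympos
          linarith
        · rw [hod.neg_one_pow, hod'.neg_one_pow] at hyne
          exact hyne rfl
      · -- δ proportional to β : contradiction with signs
        exfalso
        have h2 : (p n • β + q n • δ) - (p m • β + q m • δ) = 0 := sub_eq_zero.mpr hnm
        have h3 : (q m - q n) • δ - (p n - p m) • β =
            -((p n • β + q n • δ) - (p m • β + q m • δ)) := by module
        rw [h2, neg_zero] at h3
        have h1 : (q m - q n) • δ = (p n - p m) • β := sub_eq_zero.mp h3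
        have hne' : q m - q n ≠ 0 := sub_ne_zero.mpr (Ne.symm hqe)
        have hc : δ = ((q m - q n)⁻¹ * (p n - p m)) • β := by
          have h4 := congrArg (fun x => (q m - q n)⁻¹ • x) h1
          simp only [smul_smul, inv_mul_cancel₀ hne', one_smul] at h4
          exact h4
        obtain ⟨c, hcdef⟩ : ∃ x, (q m - q n)⁻¹ * (p n - p m) = x := ⟨_, rfl⟩
        rw [hcdef] at hc
        have e1 : a = c * 2 := by
          calc a = R.coroot β δ := haa.symm
            _ = R.coroot β (c • β) := by rw [← hc]
            _ = c * 2 := by rw [map_smul, h2β, smul_eq_mul]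
        have e2 : R.coroot δ δ = c * b := by
          calc R.coroot δ δ = R.coroot δ (c • β) := by rw [← hc]
            _ = c * b := by rw [map_smul, smul_eq_mul, hbb]
        have hcpos : 0 < c := by linarith
        have hcb : c * b < 0 := mul_neg_of_pos_of_neg hcpos hbneg
        rw [h2δ] at e2
        linarith
    exact hR.finite.not_infinite (Set.infinite_of_injective_forall_mem hinj humem)

end RootData
namespace RootData

variable {R : RootData}

lemma WPar_le_weyl (i : Fin R.r) : R.WPar i ≤ R.weylGroup := by
  refine (Subgroup.closure_le _).mpr ?_
  rintro x ⟨j, -, rfl⟩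
  exact S_mem_weyl j

lemma S_maps_spanP (hR : R.IsRootSystem) {i j : Fin R.r} (hj : j ≠ i) {x : R.V}
    (hx : x ∈ Submodule.span ℚ (R.α '' {j | j ≠ i})) :
    R.S j x ∈ Submodule.span ℚ (R.α '' {j | j ≠ i}) := by
  rw [show R.S j x = R.s (R.α j) x from rfl, s_apply hR (hR.simple_mem j)]
  exact Submodule.sub_mem _ hx
    (Submodule.smul_mem _ _ (Submodule.subset_span ⟨j, hj, rfl⟩))

lemma WPar_maps_spanP (hR : R.IsRootSystem) {i : Fin R.r} {g : R.Aut} (hg : g ∈ R.WPar i) :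
    (∀ x ∈ Submodule.span ℚ (R.α '' {j | j ≠ i}), g x ∈ Submodule.span ℚ (R.α '' {j | j ≠ i})) ∧
    (∀ x ∈ Submodule.span ℚ (R.α '' {j | j ≠ i}), g⁻¹ x ∈ Submodule.span ℚ (R.α '' {j | j ≠ i})) := by
  induction hg using Subgroup.closure_induction with
  | mem x hx =>
      obtain ⟨j, hj, rfl⟩ := hx
      constructor
      · intro x hx; exact S_maps_spanP hR hj hx
      · intro x hx
        rw [show (R.S j)⁻¹ = R.S j from S_inv hR j]
        exact S_maps_spanP hR hj hx
  | one => exact ⟨fun x hx => hx, fun x hx => by simpa using hx⟩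
  | mul a b _ _ ha hb =>
      refine ⟨fun x hx => ha.1 _ (hb.1 x hx), fun x hx => ?_⟩
      rw [mul_inv_rev]
      exact hb.2 _ (ha.2 x hx)
  | inv a _ ha => exact ⟨fun x hx => ha.2 x hx, fun x hx => by simpa using ha.1 x hx⟩

lemma coord_i_eq_zero (hR : R.IsRootSystem) {i : Fin R.r} {x : R.V}
    (hx : x ∈ Submodule.span ℚ (R.α '' {j | j ≠ i})) : (bas hR).repr x i = 0 := by
  induction hx using Submodule.span_induction with
  | mem x hx =>
      obtain ⟨j, hj, rfl⟩ := hx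
      rw [← bas_apply hR, Module.Basis.repr_self]
      rw [Finsupp.single_apply, if_neg hj]
  | zero => simp
  | add a b _ _ ha hb => rw [map_add]; simp [Finsupp.add_apply, ha, hb]
  | smul c a _ ha => rw [map_smul]; simp [Finsupp.smul_apply, ha]

/-- The coordinate-sum functional. -/
noncomputable def Fsum (hR : R.IsRootSystem) (x : R.V) : ℚ := ∑ k, (bas hR).repr x k

lemma Fsum_S (hR : R.IsRootSystem) (j : Fin R.r) (x : R.V) :
    Fsum hR (R.S j x) = Fsum hR x - R.coroot (R.α j) x := by
  unfold Fsum
  rw [show R.S j x = R.s (R.α j) x from rfl, s_apply hR (hR.simple_mem j)]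
  rw [map_sub, map_smul]
  rw [show ((bas hR).repr (R.α j)) = Finsupp.single j 1 by
    rw [← bas_apply hR, Module.Basis.repr_self]]
  simp [Finsupp.sub_apply, Finsupp.smul_apply, Finsupp.single_apply, Finset.sum_sub_distrib]

/-- Reflections along roots of the Levi lie in the parabolic subgroup. -/
lemma s_mem_WPar (hR : R.IsRootSystem) {i : Fin R.r} :
    ∀ δ : R.V, δ ∈ R.pos → δ ∈ Submodule.span ℚ (R.α '' {j | j ≠ i}) →
    R.s δ ∈ R.WPar i := by
  suffices H : ∀ N : ℕ, ∀ δ : R.V, δ ∈ R.pos →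
      δ ∈ Submodule.span ℚ (R.α '' {j | j ≠ i}) →
      ((hR.finite.toFinset).filter (fun x => Fsum hR x < Fsum hR δ)).card = N →
      R.s δ ∈ R.WPar i by
    intro δ h1 h2
    exact H _ δ h1 h2 rfl
  intro N
  induction N using Nat.strong_induction_on with
  | _ N ih =>
    intro δ hpos hspan hm
    have hδΦ : δ ∈ R.Φ := hR.pos_subset hpos
    have h2δ : R.coroot δ δ = 2 := hR.coroot_self δ hδΦ
    -- find j with positive pairing and nonzero coordinate
    have hsum : ∑ k, ((bas hR).repr δ k) * R.coroot δ (R.α k) = 2 := by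
      have h := congrArg (R.coroot δ) (Module.Basis.sum_repr (bas hR) δ)
      rw [map_sum] at h
      simp only [map_smul, smul_eq_mul, bas_apply hR] at h
      rw [h, h2δ]
    have hj : ∃ j, (bas hR).repr δ j ≠ 0 ∧ 0 < R.coroot δ (R.α j) := by
      by_contra hno
      push_neg at hno
      have hle : ∑ k, ((bas hR).repr δ k) * R.coroot δ (R.α k) ≤ 0 := by
        refine Finset.sum_nonpos fun k _ => ?_
        by_cases hk0 : (bas hR).repr δ k = 0
        · rw [hk0, zero_mul]
        · exact mul_nonpos_of_nonneg_of_nonpos (coords_nonneg hR hpos k) (hno k hk0)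
      linarith
    obtain ⟨j, hcj, hpair⟩ := hj
    have hji : j ≠ i := fun h => hcj (h ▸ coord_i_eq_zero hR hspan)
    have hSj : R.S j ∈ R.WPar i := Subgroup.subset_closure ⟨j, hji, rfl⟩
    have hpairβ : 0 < R.coroot (R.α j) δ :=
      sign_lemma hR hδΦ (hR.simple_mem j) hpair
    by_cases hray : ∀ k, k ≠ j → (bas hR).repr δ k = 0
    · rw [s_eq_S_of_ray hR hδΦ hray]
      exact hSj
    · push_neg at hray
      obtain ⟨k, hkj, hck⟩ := hray
      set δ' := R.S j δ with hδ'
      have hδ'pos : δ' ∈ R.pos := S_pos hR hkj hpos hck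
      have hδ'Φ : δ' ∈ R.Φ := hR.pos_subset hδ'pos
      have hδ'span : δ' ∈ Submodule.span ℚ (R.α '' {j | j ≠ i}) := S_maps_spanP hR hji hspan
      have hFlt : Fsum hR δ' < Fsum hR δ := by
        rw [hδ', Fsum_S hR]
        linarith
      -- the measure decreases
      have hmlt : ((hR.finite.toFinset).filter (fun x => Fsum hR x < Fsum hR δ')).card < N := by
        rw [← hm]
        apply Finset.card_lt_card
        rw [Finset.ssubset_iff_of_subset]
        · exact ⟨δ', by
            rw [Finset.mem_filter]
            exact ⟨hR.finite.mem_toFinset.mpr hδ'Φ, hFlt⟩, by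
            rw [Finset.mem_filter]
            rintro ⟨-, hlt⟩
            exact lt_irrefl _ hlt⟩
        · intro x hx
          rw [Finset.mem_filter] at hx ⊢
          exact ⟨hx.1, lt_trans hx.2 hFlt⟩
      have hrec : R.s δ' ∈ R.WPar i := ih _ hmlt δ' hδ'pos hδ'span rfl
      have hconj : R.S j * R.s δ * (R.S j)⁻¹ = R.s δ' := conj_s hR (S_mem_weyl j) hδΦ
      have : R.s δ = (R.S j)⁻¹ * R.s δ' * R.S j := by
        rw [← hconj]
        group
      rw [this]
      exact mul_mem (mul_mem (inv_mem hSj) hrec) hSj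

/-- Minimal coset representatives map Levi-positive roots to positive roots. -/
lemma minRep_maps_pos (hR : R.IsRootSystem) {i : Fin R.r} {u : R.Aut}
    (hu : u ∈ R.minReps i) {δ : R.V} (hδpos : δ ∈ R.pos)
    (hδspan : δ ∈ Submodule.span ℚ (R.α '' {j | j ≠ i})) : u δ ∈ R.pos := by
  by_contra hneg
  have hδΦ : δ ∈ R.Φ := hR.pos_subset hδpos
  have huW : u ∈ R.weylGroup := hu.1
  have hsW : R.s δ ∈ R.WPar i := s_mem_WPar hR δ hδpos hδspan
  have h1 : R.BruhatLT (R.s δ * u⁻¹) u⁻¹ := by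
    refine crit_of_neg hR hδpos (inv_mem huW) ?_
    simpa using hneg
  have h2 := bruhatLT_inv hR h1
  rw [mul_inv_rev, inv_inv, s_inv hR hδΦ] at h2
  have hlen := bruhatLT_len h2
  have hmin := hu.2 (R.s δ) hsW
  omega

end RootData
theorem statement16 (R : RootData) (hR : R.IsRootSystem)
    (i : Fin R.r) (u v : R.Aut)
    (hu : u ∈ R.minReps i) (hv : v ∈ R.minReps i)
    (y : R.Aut) (hy : y ∈ R.WPar i)
    (γ : R.V) (hγ : γ ∈ R.parPos i) :
    R.BruhatLT (R.s γ * y) y ↔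
      R.BruhatLT (R.s (v γ) * (v * y * u⁻¹)) (v * y * u⁻¹) := by
  open RootData in
  obtain ⟨hγpos, hγspan⟩ := hγ
  have hγΦ : γ ∈ R.Φ := hR.pos_subset hγpos
  have hyW : y ∈ R.weylGroup := WPar_le_weyl i hy
  have huW : u ∈ R.weylGroup := hu.1
  have hvW : v ∈ R.weylGroup := hv.1
  have hvγpos : v γ ∈ R.pos := minRep_maps_pos hR hv hγpos hγspan
  have hδΦ : y⁻¹ γ ∈ R.Φ := weyl_mem_Φ hR (inv_mem hyW) hγΦ
  have hδspan : y⁻¹ γ ∈ Submodule.span ℚ (R.α '' {j | j ≠ i}) :=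
    (WPar_maps_spanP hR hy).2 γ hγspan
  have hwW : v * y * u⁻¹ ∈ R.weylGroup := mul_mem (mul_mem hvW hyW) (inv_mem huW)
  rw [crit hR hγpos hyW, crit hR hvγpos hwW]
  have harg : (v * y * u⁻¹)⁻¹ (v γ) = u (y⁻¹ γ) := by
    have he : (v * y * u⁻¹)⁻¹ = u * (y⁻¹ * v⁻¹) := by group
    rw [he]
    show u ((y⁻¹ * v⁻¹) (v γ)) = u (y⁻¹ γ)
    congr 1
    show y⁻¹ (v⁻¹ (v γ)) = y⁻¹ γ
    congr 1
    exact v.symm_apply_apply γ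
  rw [harg]
  constructor
  · intro h hcon
    have hneg : -(y⁻¹ γ) ∈ R.pos := neg_pos_of_not_pos hR hδΦ h
    have hum : u (-(y⁻¹ γ)) ∈ R.pos :=
      minRep_maps_pos hR hu hneg (Submodule.neg_mem _ hδspan)
    rw [map_neg] at hum
    have huΦ : u (y⁻¹ γ) ∈ R.Φ := weyl_mem_Φ hR huW hδΦ
    exact (not_pos_neg hR huΦ hcon) hum
  · intro h hpos
    exact h (minRep_maps_pos hR hu hpos hδspan)
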